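/- Let C be a nonempty weak* compact convex subset of a dual Banach space and let {T₁, …, T_n} be a finite commuting family of weak*-continuous nonexpansive self-maps of C. Then the common fixed point set ⋂_{i=1}^n Fix T_i is nonempty and is a nonexpansive retract of C. -/

import Mathlib

open Filter Topology

set_option maxHeartbeats 1600000

namespace Stmt13

open Set

variable {E : Type*} [NormedAddCommGroup E] [NormedSpace ℝ E]

/-! ### Elementary lemmas about the weak-star dual -/

lemma eval_sub (a b : WeakDual ℝ E) (e : E) : (a - b) e = a e - b e := rfl

lemma norm_toNormedDual_le_iff (w : WeakDual ℝ E) {c : ℝ} (hc : 0 ≤ c) :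
    ‖WeakDual.toStrongDual w‖ ≤ c ↔ ∀ e : E, |w e| ≤ c * ‖e‖ := by
  constructor
  · intro h e
    have h2 := (WeakDual.toStrongDual w).le_opNorm e
    rw [WeakDual.toStrongDual_apply] at h2
    calc |w e| = ‖w e‖ := (Real.norm_eq_abs _).symm
    _ ≤ ‖WeakDual.toStrongDual w‖ * ‖e‖ := h2
    _ ≤ c * ‖e‖ := by gcongr
  · intro h
    refine ContinuousLinearMap.opNorm_le_bound _ hc fun e => ?_
    rw [WeakDual.toStrongDual_apply, Real.norm_eq_abs]
    exact h e

lemma isClosed_pairLE {c : ℝ} (hc : 0 ≤ c) :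
    IsClosed {p : WeakDual ℝ E × WeakDual ℝ E | ‖WeakDual.toStrongDual (p.1 - p.2)‖ ≤ c} := by
  have h : {p : WeakDual ℝ E × WeakDual ℝ E | ‖WeakDual.toStrongDual (p.1 - p.2)‖ ≤ c}
      = ⋂ e : E, {p : WeakDual ℝ E × WeakDual ℝ E | |p.1 e - p.2 e| ≤ c * ‖e‖} := by
    ext p
    simp only [Set.mem_setOf_eq, Set.mem_iInter, norm_toNormedDual_le_iff _ hc, eval_sub]
  rw [h]
  refine isClosed_iInter fun e => isClosed_le ?_ continuous_const
  exact (((WeakDual.eval_continuous e).comp continuous_fst).sub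
    ((WeakDual.eval_continuous e).comp continuous_snd)).abs

lemma isClosed_normLE (c : ℝ) :
    IsClosed {w : WeakDual ℝ E | ‖WeakDual.toStrongDual w‖ ≤ c} := by
  have h : {w : WeakDual ℝ E | ‖WeakDual.toStrongDual w‖ ≤ c}
      = WeakDual.toStrongDual ⁻¹' Metric.closedBall 0 c := by
    ext w; simp [Metric.mem_closedBall, dist_zero_right]
  rw [h]
  exact WeakDual.isClosed_closedBall 0 c

lemma nhds_weakDual (x₀ : WeakDual ℝ E) :
    𝓝 x₀ = Filter.comap (fun (w : WeakDual ℝ E) (e : E) => w e) (𝓝 (fun e => x₀ e)) :=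
  nhds_induced _ x₀

/-- extraction of a basic neighborhood in the weak-star topology -/
lemma exists_basic_nhds (x₀ : WeakDual ℝ E) {V : Set (WeakDual ℝ E)} (hV : V ∈ 𝓝 x₀) :
    ∃ (F : Finset E) (ε : ℝ), 0 < ε ∧
      {w : WeakDual ℝ E | ∀ e ∈ F, |w e - x₀ e| < ε} ⊆ V := by
  classical
  rw [nhds_weakDual, Filter.mem_comap] at hV
  obtain ⟨W, hW, hWV⟩ := hV
  rw [nhds_pi, Filter.mem_pi] at hW
  obtain ⟨I, hIfin, t, ht, htW⟩ := hW
  have hball : ∀ e : E, ∃ δ : ℝ, 0 < δ ∧ Metric.ball (x₀ e) δ ⊆ t e := by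
    intro e
    exact Metric.mem_nhds_iff.mp (ht e)
  choose δ hδpos hδsub using hball
  set F : Finset E := hIfin.toFinset with hFdef
  by_cases hF : F.Nonempty
  · refine ⟨F, F.inf' hF δ, ?_, ?_⟩
    · rcases Finset.exists_mem_eq_inf' hF δ with ⟨e, -, he⟩
      rw [he]; exact hδpos e
    · intro w hw
      apply hWV
      apply htW
      intro e heI
      have heF : e ∈ F := by rwa [hFdef, Set.Finite.mem_toFinset]
      have h1 : |w e - x₀ e| < F.inf' hF δ := hw e heF
      have h2 : F.inf' hF δ ≤ δ e := Finset.inf'_le _ heF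
      apply hδsub e
      rw [Metric.mem_ball, Real.dist_eq]
      linarith
  · refine ⟨F, 1, one_pos, ?_⟩
    intro w _
    apply hWV
    apply htW
    intro e heI
    exact absurd ⟨e, by rwa [hFdef, Set.Finite.mem_toFinset]⟩ hF

/-- A weak-star compact convex set is norm bounded. -/
lemma exists_norm_bound (C : Set (WeakDual ℝ E)) (hne : C.Nonempty) (hcomp : IsCompact C)
    (hconv : Convex ℝ C) :
    ∃ B : ℝ, 0 ≤ B ∧ ∀ w ∈ C, ‖WeakDual.toStrongDual w‖ ≤ B := by
  classical
  haveI : CompactSpace ↥C := isCompact_iff_compactSpace.mp hcomp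
  haveI : Nonempty ↥C := hne.to_subtype
  set A : ℕ → Set ↥C := fun m => {z : ↥C | ‖WeakDual.toStrongDual (z : WeakDual ℝ E)‖ ≤ (m : ℝ)}
    with hA
  have hAclosed : ∀ m, IsClosed (A m) := fun m =>
    (isClosed_normLE (m : ℝ)).preimage continuous_subtype_val
  have hAcover : (⋃ m, A m) = univ := by
    ext z
    simp only [Set.mem_iUnion, Set.mem_univ, iff_true, hA, Set.mem_setOf_eq]
    obtain ⟨m, hm⟩ := exists_nat_ge ‖WeakDual.toStrongDual (z : WeakDual ℝ E)‖
    exact ⟨m, hm⟩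
  obtain ⟨m₀, hm₀⟩ := nonempty_interior_of_iUnion_of_closed hAclosed hAcover
  obtain ⟨z₀, hz₀⟩ := hm₀
  set x₀ : WeakDual ℝ E := (z₀ : WeakDual ℝ E) with hx₀
  have hx₀C : x₀ ∈ C := z₀.2
  have hOnhds : A m₀ ∈ 𝓝 z₀ := mem_interior_iff_mem_nhds.mp hz₀
  rw [nhds_subtype, Filter.mem_comap] at hOnhds
  obtain ⟨V, hVmem, hVsub⟩ := hOnhds
  obtain ⟨F, ε, hεpos, hbasic⟩ := exists_basic_nhds x₀ hVmem
  have hbound : ∀ w ∈ C, w ∈ V → ‖WeakDual.toStrongDual w‖ ≤ (m₀ : ℝ) := by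
    intro w hwC hwV
    have h1 : (⟨w, hwC⟩ : ↥C) ∈ Subtype.val ⁻¹' V := hwV
    have h2 := hVsub h1
    simpa [hA] using h2
  have hMe : ∀ e : E, ∃ b : ℝ, ∀ w ∈ C, |w e - x₀ e| ≤ b := by
    intro e
    have hcont : Continuous fun w : WeakDual ℝ E => |w e - x₀ e| :=
      ((WeakDual.eval_continuous e).sub continuous_const).abs
    obtain ⟨b, hb⟩ := (hcomp.image hcont).bddAbove
    exact ⟨b, fun w hw => hb ⟨w, hw, rfl⟩⟩
  choose b hb using hMe
  set M : ℕ := F.sup fun e => ⌈b e⌉₊ with hM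
  have hbM : ∀ e ∈ F, ∀ w ∈ C, |w e - x₀ e| ≤ (M : ℝ) := by
    intro e he w hw
    calc |w e - x₀ e| ≤ b e := hb e w hw
    _ ≤ (⌈b e⌉₊ : ℝ) := Nat.le_ceil _
    _ ≤ (M : ℝ) := by exact_mod_cast Nat.cast_le.mpr (Finset.le_sup (f := fun e => ⌈b e⌉₊) he)
  set τ : ℝ := min (ε / (M + 1)) 1 with hτ
  have hτpos : 0 < τ := lt_min (div_pos hεpos (by positivity)) one_pos
  have hτle1 : τ ≤ 1 := min_le_right _ _
  refine ⟨‖WeakDual.toStrongDual x₀‖ + ((m₀ : ℝ) + ‖WeakDual.toStrongDual x₀‖) / τ, by positivity,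
    fun g hg => ?_⟩
  set hpt : WeakDual ℝ E := (1 - τ) • x₀ + τ • g with hhpt
  have hhC : hpt ∈ C := hconv hx₀C hg (by linarith) (le_of_lt hτpos) (by ring)
  have hhV : hpt ∈ V := by
    apply hbasic
    intro e he
    have heq : hpt e - x₀ e = τ * (g e - x₀ e) := by
      have h0 : hpt e = (1 - τ) * x₀ e + τ * g e := rfl
      rw [h0]; ring
    rw [heq, abs_mul, abs_of_pos hτpos]
    calc τ * |g e - x₀ e| ≤ τ * M := by
          have := hbM e he g hg
          nlinarith
    _ ≤ (ε / (M + 1)) * M := by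
          have h1 : τ ≤ ε / (M + 1) := min_le_left _ _
          have h2 : (0:ℝ) ≤ (M:ℝ) := Nat.cast_nonneg _
          nlinarith
    _ < ε := by
          rw [div_mul_eq_mul_div, div_lt_iff₀ (by positivity)]
          nlinarith
  have hhnorm : ‖WeakDual.toStrongDual hpt‖ ≤ (m₀ : ℝ) := hbound _ hhC hhV
  have key : τ • g = hpt - (1 - τ) • x₀ := by rw [hhpt]; module
  have hmain : τ * ‖WeakDual.toStrongDual g‖ ≤ (m₀ : ℝ) + ‖WeakDual.toStrongDual x₀‖ := by
    have h1 : ‖WeakDual.toStrongDual (τ • g)‖ = τ * ‖WeakDual.toStrongDual g‖ := by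
      rw [map_smul, norm_smul, Real.norm_eq_abs, abs_of_pos hτpos]
    have h2 : ‖WeakDual.toStrongDual (hpt - (1 - τ) • x₀)‖
        ≤ ‖WeakDual.toStrongDual hpt‖ + (1 - τ) * ‖WeakDual.toStrongDual x₀‖ := by
      rw [map_sub]
      refine (norm_sub_le _ _).trans ?_
      rw [map_smul, norm_smul, Real.norm_eq_abs, abs_of_nonneg (by linarith)]
    rw [← h1, key]
    refine h2.trans ?_
    have hx₀nn : 0 ≤ ‖WeakDual.toStrongDual x₀‖ := norm_nonneg _
    nlinarith
  have hτ' : ‖WeakDual.toStrongDual g‖ ≤ ((m₀ : ℝ) + ‖WeakDual.toStrongDual x₀‖) / τ := by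
    rw [le_div_iff₀ hτpos]; linarith
  have hx₀nn : (0:ℝ) ≤ ‖WeakDual.toStrongDual x₀‖ := norm_nonneg _
  linarith

/-- identity coercions -/
lemma toWeak_toNormed (u : WeakDual ℝ E) :
    StrongDual.toWeakDual (WeakDual.toStrongDual u) = u := rfl

lemma toNormed_toWeak (z : StrongDual ℝ E) :
    WeakDual.toStrongDual (StrongDual.toWeakDual z) = z := rfl

lemma eps_le_zero {u B : ℝ} (h : ∀ m : ℕ, u ≤ B * (1 / (m + 2))) : u ≤ 0 := by
  by_contra hu
  push_neg at hu
  obtain ⟨m, hm⟩ := exists_nat_gt (B / u)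
  have h1 := h m
  have h2 : (0:ℝ) < (m:ℝ) + 2 := by positivity
  rw [div_lt_iff₀ hu] at hm
  rw [mul_one_div, le_div_iff₀ h2] at h1
  nlinarith

/-- The key induction step: given a nonexpansive retraction `r` of `C` onto a compact
`Tk`-invariant subset `F`, produce a nonexpansive retraction onto `F ∩ Fix Tk`. -/
lemma step (C : Set (WeakDual ℝ E)) (hne : C.Nonempty) (hcomp : IsCompact C) (hconv : Convex ℝ C)
    (Tk : WeakDual ℝ E → WeakDual ℝ E) (hTkmaps : Set.MapsTo Tk C C)
    (hTkc : ContinuousOn Tk C)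
    (hTkne : ∀ y ∈ C, ∀ z ∈ C,
      ‖WeakDual.toStrongDual (Tk y - Tk z)‖ ≤ ‖WeakDual.toStrongDual (y - z)‖)
    (F : Set (WeakDual ℝ E)) (hFsub : F ⊆ C) (hFcomp : IsCompact F)
    (hTkF : Set.MapsTo Tk F F)
    (r : WeakDual ℝ E → WeakDual ℝ E) (hr1 : Set.MapsTo r C F)
    (hr2 : ∀ y ∈ C, ∀ z ∈ C,
      ‖WeakDual.toStrongDual (r y - r z)‖ ≤ ‖WeakDual.toStrongDual (y - z)‖)
    (hr3 : ∀ x ∈ F, r x = x) :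
    ∃ r' : WeakDual ℝ E → WeakDual ℝ E,
      Set.MapsTo r' C {x | x ∈ F ∧ Tk x = x} ∧
      (∀ y ∈ C, ∀ z ∈ C,
        ‖WeakDual.toStrongDual (r' y - r' z)‖ ≤ ‖WeakDual.toStrongDual (y - z)‖) ∧
      (∀ x, x ∈ F ∧ Tk x = x → r' x = x) := by
  classical
  obtain ⟨B, hB0, hB⟩ := exists_norm_bound C hne hcomp hconv
  set S : WeakDual ℝ E → WeakDual ℝ E := fun z => Tk (r z) with hSdef
  have hSC : ∀ z ∈ C, S z ∈ C := fun z hz => hTkmaps (hFsub (hr1 hz))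
  have hSF : ∀ z ∈ C, S z ∈ F := fun z hz => hTkF (hr1 hz)
  have hSne : ∀ y ∈ C, ∀ z ∈ C,
      ‖WeakDual.toStrongDual (S y - S z)‖ ≤ ‖WeakDual.toStrongDual (y - z)‖ := fun y hy z hz =>
    (hTkne _ (hFsub (hr1 hy)) _ (hFsub (hr1 hz))).trans (hr2 y hy z hz)
  have hSfix : ∀ x, x ∈ F ∧ Tk x = x → S x = x := by
    intro x hx
    show Tk (r x) = x
    rw [hr3 x hx.1, hx.2]
  set δ : ℕ → ℝ := fun m => 1 / ((m : ℝ) + 2) with hδdef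
  have hδpos : ∀ m, 0 < δ m := fun m => by positivity
  have hδle1 : ∀ m, δ m ≤ 1 := by
    intro m
    rw [hδdef]
    rw [div_le_one (by positivity)]
    have : (0:ℝ) ≤ (m:ℝ) := Nat.cast_nonneg _
    linarith
  have hδmono : ∀ {m m' : ℕ}, m' ≤ m → δ m ≤ δ m' := by
    intro m m' hmm
    apply one_div_le_one_div_of_le (by positivity)
    have : (m' : ℝ) ≤ (m : ℝ) := Nat.cast_le.mpr hmm
    linarith
  -- existence of the resolvent-type approximating points
  have hexist : ∀ (m : ℕ) (x : WeakDual ℝ E), x ∈ C →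
      ∃ y, y ∈ C ∧ y = δ m • x + (1 - δ m) • S y := by
    intro m x hx
    set t : ℝ := 1 - δ m with htdef
    have ht0 : 0 ≤ t := by rw [htdef]; linarith [hδle1 m]
    have ht1 : t < 1 := by rw [htdef]; linarith [hδpos m]
    set C₂ : Set (StrongDual ℝ E) := StrongDual.toWeakDual ⁻¹' C with hC₂def
    have hC₂closed : IsClosed C₂ :=
      (hcomp.isClosed).preimage NormedSpace.Dual.toWeakDual_continuous
    have hC₂complete : IsComplete C₂ := hC₂closed.isComplete
    set Ψ : StrongDual ℝ E → StrongDual ℝ E := fun z =>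
      WeakDual.toStrongDual (δ m • x + t • S (StrongDual.toWeakDual z)) with hΨdef
    have hΨweak : ∀ z, StrongDual.toWeakDual (Ψ z)
        = δ m • x + t • S (StrongDual.toWeakDual z) := fun z => toWeak_toNormed _
    have hmapsto : Set.MapsTo Ψ C₂ C₂ := by
      intro z hz
      show StrongDual.toWeakDual (Ψ z) ∈ C
      rw [hΨweak]
      exact hconv hx (hSC _ hz) (le_of_lt (hδpos m)) ht0 (by ring)
    have hcontract : ContractingWith ⟨t, ht0⟩ (hmapsto.restrict Ψ C₂ C₂) := by
      constructor
      · exact_mod_cast ht1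
      · refine LipschitzWith.of_dist_le_mul fun z z' => ?_
        rw [Subtype.dist_eq, hmapsto.val_restrict_apply, hmapsto.val_restrict_apply]
        have hzz : Ψ ↑z - Ψ ↑z' =
            t • (WeakDual.toStrongDual (S (StrongDual.toWeakDual ↑z))
              - WeakDual.toStrongDual (S (StrongDual.toWeakDual ↑z'))) := by
          rw [hΨdef]
          simp only [map_add, map_smul]
          module
        rw [dist_eq_norm, hzz, norm_smul, Real.norm_eq_abs, abs_of_nonneg ht0, ← map_sub]
        have h4 : WeakDual.toStrongDual ((StrongDual.toWeakDual (z : StrongDual ℝ E))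
              - (StrongDual.toWeakDual (z' : StrongDual ℝ E)))
            = ((z : StrongDual ℝ E) - (z' : StrongDual ℝ E)) := by
          rw [map_sub, toNormed_toWeak, toNormed_toWeak]
        have hzC : StrongDual.toWeakDual (z : StrongDual ℝ E) ∈ C := z.2
        have hz'C : StrongDual.toWeakDual (z' : StrongDual ℝ E) ∈ C := z'.2
        have h3 := hSne _ hzC _ hz'C
        rw [h4] at h3
        have h5 : dist (z : StrongDual ℝ E) (z' : StrongDual ℝ E)
            = ‖(z : StrongDual ℝ E) - (z' : StrongDual ℝ E)‖ := dist_eq_norm _ _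
        rw [Subtype.dist_eq, h5]
        have ht0' : (0:ℝ) ≤ t := ht0
        calc t * ‖WeakDual.toStrongDual (S (StrongDual.toWeakDual ↑z)
              - S (StrongDual.toWeakDual ↑z'))‖
            ≤ t * ‖(z : StrongDual ℝ E) - (z' : StrongDual ℝ E)‖ := by
              apply mul_le_mul_of_nonneg_left h3 ht0'
        _ = (⟨t, ht0⟩ : NNReal) * ‖(z : StrongDual ℝ E) - (z' : StrongDual ℝ E)‖ := rfl
    have hstart : WeakDual.toStrongDual x ∈ C₂ := by
      show StrongDual.toWeakDual (WeakDual.toStrongDual x) ∈ C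
      rw [toWeak_toNormed]; exact hx
    obtain ⟨y₂, hy₂mem, hy₂fix, -, -⟩ :=
      hcontract.exists_fixedPoint' hC₂complete hmapsto hstart (edist_ne_top _ _)
    refine ⟨StrongDual.toWeakDual y₂, hy₂mem, ?_⟩
    have h5 := congrArg StrongDual.toWeakDual hy₂fix
    rw [hΨweak] at h5
    exact h5.symm
  -- uniqueness of such points
  have huniq : ∀ (m : ℕ) (x y y' : WeakDual ℝ E), y ∈ C → y' ∈ C →
      y = δ m • x + (1 - δ m) • S y → y' = δ m • x + (1 - δ m) • S y' → y = y' := by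
    intro m x y y' hy hy' e1 e2
    have h1 : y - y' = (1 - δ m) • (S y - S y') := by
      conv_lhs => rw [e1, e2]
      module
    have h2 : ‖WeakDual.toStrongDual (y - y')‖
        ≤ (1 - δ m) * ‖WeakDual.toStrongDual (y - y')‖ := by
      calc ‖WeakDual.toStrongDual (y - y')‖
          = (1 - δ m) * ‖WeakDual.toStrongDual (S y - S y')‖ := by
            rw [h1, map_smul, norm_smul, Real.norm_eq_abs,
              abs_of_nonneg (by linarith [hδle1 m])]
      _ ≤ (1 - δ m) * ‖WeakDual.toStrongDual (y - y')‖ := by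
            apply mul_le_mul_of_nonneg_left (hSne _ hy _ hy') (by linarith [hδle1 m])
    have h3 : ‖WeakDual.toStrongDual (y - y')‖ ≤ 0 := by
      nlinarith [hδpos m, norm_nonneg (WeakDual.toStrongDual (y - y'))]
    have h4 : WeakDual.toStrongDual (y - y') = 0 := norm_le_zero_iff.mp h3
    have h6 : y - y' = 0 := (LinearEquiv.map_eq_zero_iff _).mp h4
    exact sub_eq_zero.mp h6
  -- package as maps on the subtype
  have hex2 : ∀ (m : ℕ) (z : ↥C), ∃ y : ↥C,
      (y : WeakDual ℝ E) = δ m • (z : WeakDual ℝ E) + (1 - δ m) • S y := by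
    intro m z
    obtain ⟨y, hyC, hy⟩ := hexist m (z : WeakDual ℝ E) z.2
    exact ⟨⟨y, hyC⟩, hy⟩
  choose g hg using hex2
  -- basic estimates on the approximating maps
  have hE1 : ∀ (m : ℕ) (z : ↥C),
      ‖WeakDual.toStrongDual ((g m z : WeakDual ℝ E) - S (g m z))‖ ≤ 2 * B * δ m := by
    intro m z
    have h1 : (g m z : WeakDual ℝ E) - S (g m z)
        = δ m • ((z : WeakDual ℝ E) - S (g m z)) := by
      calc (g m z : WeakDual ℝ E) - S (g m z)
          = (δ m • (z : WeakDual ℝ E) + (1 - δ m) • S (g m z)) - S (g m z) := by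
            rw [← hg m z]
      _ = δ m • ((z : WeakDual ℝ E) - S (g m z)) := by module
    rw [h1, map_smul, norm_smul, Real.norm_eq_abs, abs_of_pos (hδpos m)]
    have h2 : ‖WeakDual.toStrongDual ((z : WeakDual ℝ E) - S (g m z))‖ ≤ 2 * B := by
      rw [map_sub]
      refine (norm_sub_le _ _).trans ?_
      have hb1 := hB _ z.2
      have hb2 := hB _ (hSC _ (g m z).2)
      linarith
    calc δ m * ‖WeakDual.toStrongDual ((z : WeakDual ℝ E) - S (g m z))‖
        ≤ δ m * (2 * B) := mul_le_mul_of_nonneg_left h2 (le_of_lt (hδpos m))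
    _ = 2 * B * δ m := by ring
  have hE3 : ∀ (m : ℕ) (z : ↥C),
      ‖WeakDual.toStrongDual ((g m z : WeakDual ℝ E) - r (g m z))‖ ≤ 2 * (2 * B * δ m) := by
    intro m z
    set a : WeakDual ℝ E := (g m z : WeakDual ℝ E) with hadef
    set w : WeakDual ℝ E := S (g m z) with hwdef
    have hwF : w ∈ F := hSF _ (g m z).2
    have hsplit : WeakDual.toStrongDual (a - r a)
        = WeakDual.toStrongDual (a - w) + WeakDual.toStrongDual (w - r a) := by
      rw [← map_add]
      congr 1
      abel
    have htri : ‖WeakDual.toStrongDual (a - r a)‖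
        ≤ ‖WeakDual.toStrongDual (a - w)‖ + ‖WeakDual.toStrongDual (w - r a)‖ := by
      rw [hsplit]; exact norm_add_le _ _
    have hw2 : ‖WeakDual.toStrongDual (w - r a)‖ ≤ ‖WeakDual.toStrongDual (w - a)‖ := by
      have := hr2 w (hFsub hwF) a (g m z).2
      rwa [hr3 w hwF] at this
    have hw3 : ‖WeakDual.toStrongDual (w - a)‖ = ‖WeakDual.toStrongDual (a - w)‖ := by
      rw [show w - a = -(a - w) by abel, map_neg, norm_neg]
    have hE1' := hE1 m z
    rw [← hwdef, ← hadef] at hE1'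
    calc ‖WeakDual.toStrongDual (a - r a)‖
        ≤ ‖WeakDual.toStrongDual (a - w)‖ + ‖WeakDual.toStrongDual (w - r a)‖ := htri
    _ ≤ ‖WeakDual.toStrongDual (a - w)‖ + ‖WeakDual.toStrongDual (a - w)‖ := by
        rw [← hw3] at *; linarith
    _ ≤ 2 * (2 * B * δ m) := by linarith
  have hE4 : ∀ (m : ℕ) (z : ↥C),
      ‖WeakDual.toStrongDual ((g m z : WeakDual ℝ E) - Tk (g m z))‖ ≤ 3 * (2 * B * δ m) := by
    intro m z
    set a : WeakDual ℝ E := (g m z : WeakDual ℝ E) with hadef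
    have hsplit : WeakDual.toStrongDual (a - Tk a)
        = WeakDual.toStrongDual (a - S a) + WeakDual.toStrongDual (Tk (r a) - Tk a) := by
      rw [← map_add]
      congr 1
      show a - Tk a = (a - Tk (r a)) + (Tk (r a) - Tk a)
      abel
    have htri : ‖WeakDual.toStrongDual (a - Tk a)‖
        ≤ ‖WeakDual.toStrongDual (a - S a)‖ + ‖WeakDual.toStrongDual (Tk (r a) - Tk a)‖ := by
      rw [hsplit]; exact norm_add_le _ _
    have h2 : ‖WeakDual.toStrongDual (Tk (r a) - Tk a)‖
        ≤ ‖WeakDual.toStrongDual (r a - a)‖ :=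
      hTkne _ (hFsub (hr1 (g m z).2)) _ (g m z).2
    have h3 : ‖WeakDual.toStrongDual (r a - a)‖ = ‖WeakDual.toStrongDual (a - r a)‖ := by
      rw [show r a - a = -(a - r a) by abel, map_neg, norm_neg]
    have hE1' := hE1 m z
    have hE3' := hE3 m z
    rw [← hadef] at hE1' hE3'
    calc ‖WeakDual.toStrongDual (a - Tk a)‖
        ≤ ‖WeakDual.toStrongDual (a - S a)‖ + ‖WeakDual.toStrongDual (Tk (r a) - Tk a)‖ := htri
    _ ≤ 2 * B * δ m + ‖WeakDual.toStrongDual (a - r a)‖ := by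
        rw [h3] at h2; linarith
    _ ≤ 3 * (2 * B * δ m) := by linarith
  have hE5 : ∀ (m : ℕ) (z z' : ↥C),
      ‖WeakDual.toStrongDual ((g m z : WeakDual ℝ E) - (g m z' : WeakDual ℝ E))‖
        ≤ ‖WeakDual.toStrongDual ((z : WeakDual ℝ E) - (z' : WeakDual ℝ E))‖ := by
    intro m z z'
    have h1 : (g m z : WeakDual ℝ E) - (g m z' : WeakDual ℝ E)
        = δ m • ((z : WeakDual ℝ E) - (z' : WeakDual ℝ E))
          + (1 - δ m) • (S (g m z) - S (g m z')) := by
      conv_lhs => rw [hg m z, hg m z']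
      module
    have h2 : ‖WeakDual.toStrongDual ((g m z : WeakDual ℝ E) - (g m z' : WeakDual ℝ E))‖
        ≤ δ m * ‖WeakDual.toStrongDual ((z : WeakDual ℝ E) - (z' : WeakDual ℝ E))‖
          + (1 - δ m) * ‖WeakDual.toStrongDual ((g m z : WeakDual ℝ E) - (g m z' : WeakDual ℝ E))‖ := by
      calc ‖WeakDual.toStrongDual ((g m z : WeakDual ℝ E) - (g m z' : WeakDual ℝ E))‖
          = ‖δ m • WeakDual.toStrongDual ((z : WeakDual ℝ E) - (z' : WeakDual ℝ E))
              + (1 - δ m) • WeakDual.toStrongDual (S (g m z) - S (g m z'))‖ := by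
            rw [h1]; rw [map_add, map_smul, map_smul]
      _ ≤ δ m * ‖WeakDual.toStrongDual ((z : WeakDual ℝ E) - (z' : WeakDual ℝ E))‖
          + (1 - δ m) * ‖WeakDual.toStrongDual (S (g m z) - S (g m z'))‖ := by
            refine (norm_add_le _ _).trans ?_
            rw [norm_smul, norm_smul, Real.norm_eq_abs, Real.norm_eq_abs,
              abs_of_pos (hδpos m), abs_of_nonneg (by linarith [hδle1 m])]
      _ ≤ δ m * ‖WeakDual.toStrongDual ((z : WeakDual ℝ E) - (z' : WeakDual ℝ E))‖
          + (1 - δ m) * ‖WeakDual.toStrongDual ((g m z : WeakDual ℝ E) - (g m z' : WeakDual ℝ E))‖ := by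
            have := hSne _ (g m z).2 _ (g m z').2
            have h1δ : (0:ℝ) ≤ 1 - δ m := by linarith [hδle1 m]
            nlinarith
    nlinarith [hδpos m]
  have hE6 : ∀ (m : ℕ) (z : ↥C), (z : WeakDual ℝ E) ∈ F → Tk (z : WeakDual ℝ E) = z →
      g m z = z := by
    intro m z hzF hzfix
    have hSz : S (z : WeakDual ℝ E) = z := hSfix _ ⟨hzF, hzfix⟩
    have : (g m z : WeakDual ℝ E) = (z : WeakDual ℝ E) := by
      refine huniq m (z : WeakDual ℝ E) _ _ (g m z).2 z.2 (hg m z) ?_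
      rw [hSz]
      module
    exact Subtype.ext this
  -- extract a pointwise weak-star cluster map via an ultrafilter
  haveI : CompactSpace ↥C := isCompact_iff_compactSpace.mp hcomp
  set 𝒱 : Ultrafilter ℕ := Ultrafilter.of atTop with h𝒱def
  have h𝒱le : (𝒱 : Filter ℕ) ≤ atTop := Ultrafilter.of_le _
  obtain ⟨h, -, hle⟩ := (isCompact_univ (X := ↥C → ↥C)).ultrafilter_le_nhds (𝒱.map g)
    (by simp [le_principal_iff])
  have hTend : Tendsto g (𝒱 : Filter ℕ) (𝓝 h) := hle
  have hptw : ∀ z : ↥C, Tendsto (fun m => g m z) (𝒱 : Filter ℕ) (𝓝 (h z)) :=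
    fun z => (tendsto_pi_nhds.mp hTend) z
  have hptwv : ∀ z : ↥C, Tendsto (fun m => (g m z : WeakDual ℝ E)) (𝒱 : Filter ℕ)
      (𝓝 (h z : WeakDual ℝ E)) :=
    fun z => (continuous_subtype_val.tendsto _).comp (hptw z)
  -- the cluster map lands in F and is fixed by Tk
  have hPF : ∀ z : ↥C, ((h z : WeakDual ℝ E) ∈ F ∧ Tk (h z : WeakDual ℝ E) = (h z : WeakDual ℝ E)) := by
    intro z
    have hyC : (h z : WeakDual ℝ E) ∈ C := (h z).2
    constructor
    · -- membership in F
      obtain ⟨wc, -, hwclim⟩ := (isCompact_univ (X := ↥C)).ultrafilter_le_nhds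
        (𝒱.map fun m => (⟨S (g m z), hSC _ (g m z).2⟩ : ↥C)) (by simp [le_principal_iff])
      have hwclim' : Tendsto (fun m => (⟨S (g m z), hSC _ (g m z).2⟩ : ↥C)) (𝒱 : Filter ℕ)
          (𝓝 wc) := hwclim
      set w : WeakDual ℝ E := (wc : WeakDual ℝ E) with hwdef
      have hwlim' : Tendsto (fun m => S (g m z)) (𝒱 : Filter ℕ) (𝓝 w) :=
        (continuous_subtype_val.tendsto _).comp hwclim'
      have hwF : w ∈ F :=
        (hFcomp.isClosed).mem_of_tendsto hwlim'
          (Filter.Eventually.of_forall fun m => hSF _ (g m z).2)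
      have hsub : Tendsto (fun m => (g m z : WeakDual ℝ E) - S (g m z)) (𝒱 : Filter ℕ)
          (𝓝 ((h z : WeakDual ℝ E) - w)) := (hptwv z).sub hwlim'
      have hyw : ∀ m₀ : ℕ, ‖WeakDual.toStrongDual ((h z : WeakDual ℝ E) - w)‖ ≤ 2 * B * δ m₀ := by
        intro m₀
        have hev : ∀ᶠ (m : ℕ) in (𝒱 : Filter ℕ),
            (g m z : WeakDual ℝ E) - S (g m z) ∈
              {u : WeakDual ℝ E | ‖WeakDual.toStrongDual u‖ ≤ 2 * B * δ m₀} := by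
          refine h𝒱le (eventually_atTop.mpr ⟨m₀, fun m hm => ?_⟩)
          refine (hE1 m z).trans ?_
          have := hδmono hm
          nlinarith
        exact (isClosed_normLE _).mem_of_tendsto hsub hev
      have hzero : ‖WeakDual.toStrongDual ((h z : WeakDual ℝ E) - w)‖ ≤ 0 := by
        apply eps_le_zero (B := 2 * B)
        intro m
        exact hyw m
      have h4 : WeakDual.toStrongDual ((h z : WeakDual ℝ E) - w) = 0 := norm_le_zero_iff.mp hzero
      have h6 : (h z : WeakDual ℝ E) - w = 0 := (LinearEquiv.map_eq_zero_iff _).mp h4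
      rw [sub_eq_zero.mp h6]
      exact hwF
    · -- fixed by Tk
      have hTkt : Tendsto (fun m => Tk (g m z : WeakDual ℝ E)) (𝒱 : Filter ℕ)
          (𝓝 (Tk (h z : WeakDual ℝ E))) := by
        have hwithin : Tendsto (fun m => (g m z : WeakDual ℝ E)) (𝒱 : Filter ℕ)
            (𝓝[C] (h z : WeakDual ℝ E)) := by
          rw [tendsto_nhdsWithin_iff]
          exact ⟨hptwv z, Filter.Eventually.of_forall fun m => (g m z).2⟩
        exact (hTkc _ hyC).tendsto.comp hwithin
      have hsub : Tendsto (fun m => (g m z : WeakDual ℝ E) - Tk (g m z : WeakDual ℝ E))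
          (𝒱 : Filter ℕ) (𝓝 ((h z : WeakDual ℝ E) - Tk (h z : WeakDual ℝ E))) :=
        (hptwv z).sub hTkt
      have hyw : ∀ m₀ : ℕ,
          ‖WeakDual.toStrongDual ((h z : WeakDual ℝ E) - Tk (h z : WeakDual ℝ E))‖
            ≤ 6 * B * δ m₀ := by
        intro m₀
        have hev : ∀ᶠ (m : ℕ) in (𝒱 : Filter ℕ),
            (g m z : WeakDual ℝ E) - Tk (g m z : WeakDual ℝ E) ∈
              {u : WeakDual ℝ E | ‖WeakDual.toStrongDual u‖ ≤ 6 * B * δ m₀} := by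
          refine h𝒱le (eventually_atTop.mpr ⟨m₀, fun m hm => ?_⟩)
          refine (hE4 m z).trans ?_
          have := hδmono hm
          nlinarith
        exact (isClosed_normLE _).mem_of_tendsto hsub hev
      have hzero : ‖WeakDual.toStrongDual ((h z : WeakDual ℝ E) - Tk (h z : WeakDual ℝ E))‖ ≤ 0 := by
        apply eps_le_zero (B := 6 * B)
        intro m
        exact hyw m
      have h4 : WeakDual.toStrongDual ((h z : WeakDual ℝ E) - Tk (h z : WeakDual ℝ E)) = 0 :=
        norm_le_zero_iff.mp hzero
      have h6 : (h z : WeakDual ℝ E) - Tk (h z : WeakDual ℝ E) = 0 :=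
        (LinearEquiv.map_eq_zero_iff _).mp h4
      exact (sub_eq_zero.mp h6).symm
  -- define the retraction
  refine ⟨fun x => if hx : x ∈ C then ((h ⟨x, hx⟩ : ↥C) : WeakDual ℝ E) else x, ?_, ?_, ?_⟩
  · intro x hx
    simp only [Set.mem_setOf_eq, dif_pos hx]
    exact hPF ⟨x, hx⟩
  · intro y hy z hz
    simp only [dif_pos hy, dif_pos hz]
    have hsub : Tendsto (fun m => (g m ⟨y, hy⟩ : WeakDual ℝ E) - (g m ⟨z, hz⟩ : WeakDual ℝ E))
        (𝒱 : Filter ℕ) (𝓝 ((h ⟨y, hy⟩ : WeakDual ℝ E) - (h ⟨z, hz⟩ : WeakDual ℝ E))) :=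
      (hptwv _).sub (hptwv _)
    have hev : ∀ᶠ (m : ℕ) in (𝒱 : Filter ℕ),
        (g m ⟨y, hy⟩ : WeakDual ℝ E) - (g m ⟨z, hz⟩ : WeakDual ℝ E) ∈
          {u : WeakDual ℝ E | ‖WeakDual.toStrongDual u‖ ≤ ‖WeakDual.toStrongDual (y - z)‖} :=
      Filter.Eventually.of_forall fun m => hE5 m ⟨y, hy⟩ ⟨z, hz⟩
    exact (isClosed_normLE _).mem_of_tendsto hsub hev
  · intro x hx
    have hxC : x ∈ C := hFsub hx.1
    simp only [dif_pos hxC]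
    have hconst : ∀ m, g m ⟨x, hxC⟩ = ⟨x, hxC⟩ := fun m => hE6 m ⟨x, hxC⟩ hx.1 hx.2
    have h1 : Tendsto (fun m => g m ⟨x, hxC⟩) (𝒱 : Filter ℕ) (𝓝 ⟨x, hxC⟩) := by
      simp only [hconst]
      exact tendsto_const_nhds
    have h2 := tendsto_nhds_unique (hptw ⟨x, hxC⟩) h1
    rw [h2]


end Stmt13

open Stmt13 Set

/-- A finite commuting family of weak*-continuous nonexpansive
self-maps of a nonempty weak* compact convex set `C` has a nonempty common fixed
point set which is a nonexpansive retract of `C`. -/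
theorem stmt13 {E : Type*} [NormedAddCommGroup E] [NormedSpace ℝ E]
    (C : Set (WeakDual ℝ E)) (hne : C.Nonempty) (hcomp : IsCompact C) (hconv : Convex ℝ C)
    (n : ℕ) (T : Fin n → WeakDual ℝ E → WeakDual ℝ E)
    (hTmaps : ∀ i, Set.MapsTo (T i) C C)
    (hTc : ∀ i, ContinuousOn (T i) C)
    (hTne : ∀ i, ∀ y ∈ C, ∀ z ∈ C,
      ‖WeakDual.toStrongDual (T i y - T i z)‖ ≤ ‖WeakDual.toStrongDual (y - z)‖)
    (hcomm : ∀ i j, ∀ x ∈ C, T i (T j x) = T j (T i x)) :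
    {x | x ∈ C ∧ ∀ i, T i x = x}.Nonempty ∧
    ∃ R : WeakDual ℝ E → WeakDual ℝ E,
      Set.MapsTo R C {x | x ∈ C ∧ ∀ i, T i x = x} ∧
      (∀ y ∈ C, ∀ z ∈ C,
        ‖WeakDual.toStrongDual (R y - R z)‖ ≤ ‖WeakDual.toStrongDual (y - z)‖) ∧
      (∀ x, (x ∈ C ∧ ∀ i, T i x = x) → R x = x) := by
  classical
  haveI : CompactSpace ↥C := isCompact_iff_compactSpace.mp hcomp
  set F : ℕ → Set (WeakDual ℝ E) :=
    fun k => {x | x ∈ C ∧ ∀ i : Fin n, (i : ℕ) < k → T i x = x} with hFdef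
  have hFsub : ∀ k, F k ⊆ C := fun k x hx => hx.1
  -- compactness of the partial fixed point sets
  have hCfix : ∀ i : Fin n, IsCompact {x | x ∈ C ∧ T i x = x} := by
    intro i
    have hrestr : Continuous fun z : ↥C => T i (z : WeakDual ℝ E) :=
      continuousOn_iff_continuous_restrict.mp (hTc i)
    have hA : IsClosed {z : ↥C | T i (z : WeakDual ℝ E) = (z : WeakDual ℝ E)} :=
      isClosed_eq hrestr continuous_subtype_val
    have hAc : IsCompact {z : ↥C | T i (z : WeakDual ℝ E) = (z : WeakDual ℝ E)} :=
      hA.isCompact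
    have himg : {x | x ∈ C ∧ T i x = x}
        = Subtype.val '' {z : ↥C | T i (z : WeakDual ℝ E) = (z : WeakDual ℝ E)} := by
      ext x
      constructor
      · rintro ⟨hxC, hfix⟩
        exact ⟨⟨x, hxC⟩, hfix, rfl⟩
      · rintro ⟨z, hz, rfl⟩
        exact ⟨z.2, hz⟩
    rw [himg]
    exact hAc.image continuous_subtype_val
  have hFcomp : ∀ k, IsCompact (F k) := by
    intro k
    have heq : F k = C ∩ ⋂ (i : Fin n), ⋂ (_ : (i : ℕ) < k), {x | x ∈ C ∧ T i x = x} := by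
      ext x
      simp only [hFdef, Set.mem_setOf_eq, Set.mem_inter_iff, Set.mem_iInter]
      constructor
      · rintro ⟨hxC, hfix⟩
        exact ⟨hxC, fun i hi => ⟨hxC, hfix i hi⟩⟩
      · rintro ⟨hxC, hfix⟩
        exact ⟨hxC, fun i hi => (hfix i hi).2⟩
    rw [heq]
    exact hcomp.inter_right (isClosed_iInter fun i => isClosed_iInter fun hi =>
      (hCfix i).isClosed)
  -- invariance of F k under T ⟨k, _⟩
  have hTkF : ∀ (k : ℕ) (hk : k < n), Set.MapsTo (T ⟨k, hk⟩) (F k) (F k) := by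
    intro k hk x hx
    refine ⟨hTmaps _ hx.1, fun i hi => ?_⟩
    rw [hcomm i ⟨k, hk⟩ x hx.1, hx.2 i hi]
  -- F (k+1) in terms of F k
  have hFsucc : ∀ (k : ℕ) (hk : k < n),
      {x | x ∈ F k ∧ T ⟨k, hk⟩ x = x} = F (k + 1) := by
    intro k hk
    ext x
    simp only [Set.mem_setOf_eq, hFdef]
    constructor
    · rintro ⟨⟨hxC, hfix⟩, hfixk⟩
      refine ⟨hxC, fun i hi => ?_⟩
      rcases Nat.lt_succ_iff_lt_or_eq.mp hi with hik | hik
      · exact hfix i hik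
      · have : i = ⟨k, hk⟩ := Fin.ext hik
        rw [this]
        exact hfixk
    · rintro ⟨hxC, hfix⟩
      exact ⟨⟨hxC, fun i hi => hfix i (by omega)⟩, hfix ⟨k, hk⟩ (by exact Nat.lt_succ_self k)⟩
  -- the induction producing the retraction
  have main : ∀ k : ℕ, k ≤ n → ∃ R : WeakDual ℝ E → WeakDual ℝ E,
      Set.MapsTo R C (F k) ∧
      (∀ y ∈ C, ∀ z ∈ C,
        ‖WeakDual.toStrongDual (R y - R z)‖ ≤ ‖WeakDual.toStrongDual (y - z)‖) ∧
      (∀ x ∈ F k, R x = x) := by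
    intro k
    induction k with
    | zero =>
      intro _
      refine ⟨id, fun x hx => ⟨hx, fun i hi => absurd hi (Nat.not_lt_zero _)⟩,
        fun y _ z _ => le_refl _, fun x _ => rfl⟩
    | succ k ih =>
      intro hk1
      have hkn : k < n := hk1
      obtain ⟨r, hr1, hr2, hr3⟩ := ih (Nat.le_of_succ_le hk1)
      obtain ⟨r', h1, h2, h3⟩ := step C hne hcomp hconv (T ⟨k, hkn⟩) (hTmaps _) (hTc _)
        (hTne _) (F k) (hFsub k) (hFcomp k) (hTkF k hkn) r hr1 hr2 hr3
      refine ⟨r', ?_, h2, ?_⟩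
      · intro x hx
        have := h1 hx
        rw [hFsucc k hkn] at this
        exact this
      · intro x hx
        apply h3
        have hx' : x ∈ F (k + 1) := hx
        rw [← hFsucc k hkn] at hx'
        exact hx'
  obtain ⟨R, hR1, hR2, hR3⟩ := main n le_rfl
  have hFn : F n = {x | x ∈ C ∧ ∀ i, T i x = x} := by
    ext x
    simp only [hFdef, Set.mem_setOf_eq]
    exact ⟨fun ⟨hxC, hfix⟩ => ⟨hxC, fun i => hfix i i.isLt⟩,
      fun ⟨hxC, hfix⟩ => ⟨hxC, fun i _ => hfix i⟩⟩
  constructor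
  · obtain ⟨x₀, hx₀⟩ := hne
    exact ⟨R x₀, by rw [← hFn]; exact hR1 hx₀⟩
  · refine ⟨R, ?_, hR2, fun x hx => hR3 x (by rw [hFn]; exact hx)⟩
    rw [← hFn]
    exact hR1
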